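/- Let 0 < τ < 1/2 and fix a nonnegative integer k. Define qₖ⁽ⁿ⁾ = ∑_{j=0}^{n-1} e^{-ijk·2π/n}/(1 - 2τ·cos(2πj/n)) for n > k. Then the ratio qₖ⁽ⁿ⁾/q₀⁽ⁿ⁾ converges to αᵏ as n → ∞, where α = (1 - √(1 - 4τ²))/(2τ). -/

import Mathlib

open Complex Finset Filter

lemma int_dvd_small {n p : ℤ} (hn : 0 < n) (h1 : -n < p) (h2 : p < n) (hd : n ∣ p) : p = 0 := by
  obtain ⟨c, rfl⟩ := hd
  rcases lt_trichotomy c 0 with h | h | h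
  · nlinarith
  · simp [h]
  · nlinarith

lemma sum_exp_eq (n : ℕ) (hn : 0 < n) (p : ℤ) :
    ∑ j ∈ Finset.range n, Complex.exp ((p : ℂ) * (2 * Real.pi * Complex.I) / n) ^ j
      = if (n : ℤ) ∣ p then (n : ℂ) else 0 := by
  have hn' : (n : ℂ) ≠ 0 := Nat.cast_ne_zero.mpr hn.ne'
  have hπ : (2 * (Real.pi : ℂ) * Complex.I) ≠ 0 := by
    simp [Real.pi_ne_zero, Complex.I_ne_zero]
  by_cases h : (n : ℤ) ∣ p
  · obtain ⟨c, rfl⟩ := h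
    rw [if_pos ⟨c, rfl⟩]
    have harg : ((((n : ℤ) * c : ℤ) : ℂ) * (2 * Real.pi * Complex.I) / n) = (c : ℂ) * (2 * Real.pi * Complex.I) := by
      push_cast
      field_simp
    rw [harg, Complex.exp_int_mul_two_pi_mul_I]
    simp
  · rw [if_neg h]
    set w := Complex.exp ((p : ℂ) * (2 * Real.pi * Complex.I) / n) with hw
    have hw1 : w ≠ 1 := by
      intro hww
      rw [hw, Complex.exp_eq_one_iff] at hww
      obtain ⟨m, hm⟩ := hww
      refine h ⟨m, ?_⟩
      have h2 : (p : ℂ) * (2 * Real.pi * Complex.I) = ((n : ℂ) * m) * (2 * Real.pi * Complex.I) := by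
        field_simp at hm
        linear_combination (2 * (Real.pi : ℂ) * Complex.I) * hm
      have h3 : (p : ℂ) = (n : ℂ) * m := mul_right_cancel₀ hπ h2
      exact_mod_cast h3
    have hwn : w ^ n = 1 := by
      rw [hw, ← Complex.exp_nat_mul]
      have harg : (n : ℂ) * ((p : ℂ) * (2 * Real.pi * Complex.I) / n) = (p : ℂ) * (2 * Real.pi * Complex.I) := by
        field_simp
      rw [harg, Complex.exp_int_mul_two_pi_mul_I]
    rw [geom_sum_eq hw1, hwn]
    simp

lemma term_eq (τ α : ℝ) (hτα : τ * (1 + α ^ 2) = α) (hα0 : 0 < α) (hα1 : α < 1)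
    (n k : ℕ) (hn : 0 < n) (j : ℕ) :
    Complex.exp (-Complex.I * j * k * (2 * Real.pi / n)) /
        ((1 - 2 * τ * Real.cos (2 * Real.pi * j / n) : ℝ) : ℂ)
      = (1 + (α : ℂ) ^ 2) / ((1 - (α : ℂ) ^ 2) * (1 - (α : ℂ) ^ n)) *
          (∑ m ∈ Finset.range n, (α : ℂ) ^ m *
              Complex.exp ((((m : ℤ) - k : ℤ) : ℂ) * (2 * Real.pi * Complex.I) / n) ^ j
           + ∑ m ∈ Finset.range n, (α : ℂ) ^ (m + 1) *
              Complex.exp (((-((m : ℤ) + 1 + k) : ℤ) : ℂ) * (2 * Real.pi * Complex.I) / n) ^ j) := by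
  have hn' : (n : ℂ) ≠ 0 := Nat.cast_ne_zero.mpr hn.ne'
  set x : ℝ := 2 * Real.pi * j / n with hx
  set ζ : ℂ := Complex.exp ((x : ℂ) * Complex.I) with hζ
  set A : ℂ := (α : ℂ) with hA
  have hζ0 : ζ ≠ 0 := Complex.exp_ne_zero _
  have habs : ‖ζ‖ = 1 := Complex.norm_exp_ofReal_mul_I x
  have hζmul : ζ * ζ⁻¹ = 1 := mul_inv_cancel₀ hζ0
  have hζn : ζ ^ n = 1 := by
    rw [hζ, ← Complex.exp_nat_mul]
    have harg : (n : ℂ) * ((x : ℂ) * Complex.I) = (j : ℂ) * (2 * Real.pi * Complex.I) := by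
      rw [hx]; push_cast; field_simp
    rw [harg]
    have := Complex.exp_int_mul_two_pi_mul_I (j : ℤ)
    push_cast at this
    exact this
  have hexp : ∀ p : ℤ, Complex.exp ((p : ℂ) * (2 * Real.pi * Complex.I) / n) ^ j = ζ ^ p := by
    intro p
    rw [hζ, ← Complex.exp_nat_mul, ← Complex.exp_int_mul]
    congr 1
    rw [hx]; push_cast; ring
  -- nonvanishing facts
  have hα2 : (0:ℝ) < 1 - α ^ 2 := by nlinarith
  have hαn : α ^ n < 1 := pow_lt_one₀ hα0.le hα1 hn.ne'
  have h1A2 : (1 : ℂ) - A ^ 2 ≠ 0 := by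
    rw [hA]
    have : ((1 - α ^ 2 : ℝ) : ℂ) ≠ 0 := Complex.ofReal_ne_zero.mpr (by nlinarith)
    push_cast at this; exact this
  have h1An : (1 : ℂ) - A ^ n ≠ 0 := by
    rw [hA]
    have : ((1 - α ^ n : ℝ) : ℂ) ≠ 0 := Complex.ofReal_ne_zero.mpr (by nlinarith)
    push_cast at this; exact this
  have h1pA2 : (1 : ℂ) + A ^ 2 ≠ 0 := by
    rw [hA]
    have : ((1 + α ^ 2 : ℝ) : ℂ) ≠ 0 := Complex.ofReal_ne_zero.mpr (by nlinarith)
    push_cast at this; exact this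
  have habsA : ‖A‖ = α := by rw [hA]; simp [abs_of_pos hα0]
  have hAζ : (1 : ℂ) - A * ζ ≠ 0 := by
    intro h
    have h1 : A * ζ = 1 := by linear_combination -h
    have := congrArg (fun z : ℂ => ‖z‖) h1
    simp only [norm_mul, habsA, habs, norm_one, mul_one] at this
    exact absurd this hα1.ne
  have hAζi : (1 : ℂ) - A * ζ⁻¹ ≠ 0 := by
    intro h
    have h1 : A * ζ⁻¹ = 1 := by linear_combination -h
    have := congrArg (fun z : ℂ => ‖z‖) h1
    simp only [norm_mul, habsA, norm_inv, habs, norm_one, inv_one, mul_one] at this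
    exact absurd this hα1.ne
  -- numerator
  have hnum : Complex.exp (-Complex.I * j * k * (2 * Real.pi / n)) = ζ ^ (-(k : ℤ)) := by
    rw [zpow_neg, zpow_natCast, hζ, ← Complex.exp_nat_mul, ← Complex.exp_neg]
    congr 1
    rw [hx]; push_cast; ring
  -- cosine
  have hτα' : (τ : ℂ) * (1 + A ^ 2) = A := by rw [hA]; exact_mod_cast hτα
  have hcos : Complex.cos (x : ℂ) = (ζ + ζ⁻¹) / 2 := by
    rw [hζ, ← Complex.exp_neg, ← neg_mul, Complex.exp_mul_I, Complex.exp_mul_I,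
        Complex.cos_neg, Complex.sin_neg]
    ring
  have hden : ((1 - 2 * τ * Real.cos (2 * Real.pi * j / n) : ℝ) : ℂ)
      = (1 - A * ζ) * (1 - A * ζ⁻¹) / (1 + A ^ 2) := by
    have hxx : 2 * Real.pi * (j:ℝ) / n = x := by rw [hx]
    rw [hxx, eq_div_iff h1pA2]
    push_cast [Complex.ofReal_cos]
    rw [hcos]
    linear_combination (-(ζ + ζ⁻¹)) * hτα' - A ^ 2 * hζmul
  -- geometric sums
  set G1 : ℂ := ∑ m ∈ Finset.range n, (A * ζ) ^ m with hG1def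
  set G2 : ℂ := ∑ m ∈ Finset.range n, (A * ζ⁻¹) ^ m with hG2def
  have hG1 : G1 * (1 - A * ζ) = 1 - A ^ n := by
    have := geom_sum_mul (A * ζ) n
    rw [mul_pow, hζn, mul_one] at this
    linear_combination -this
  have hG2 : G2 * (1 - A * ζ⁻¹) = 1 - A ^ n := by
    have := geom_sum_mul (A * ζ⁻¹) n
    rw [mul_pow, inv_pow, hζn, inv_one, mul_one] at this
    linear_combination -this
  -- rewrite the sums
  have hS1 : ∑ m ∈ Finset.range n, (α : ℂ) ^ m *
      Complex.exp ((((m : ℤ) - k : ℤ) : ℂ) * (2 * Real.pi * Complex.I) / n) ^ j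
      = ζ ^ (-(k : ℤ)) * G1 := by
    rw [hG1def, Finset.mul_sum]
    apply Finset.sum_congr rfl
    intro m _
    rw [hexp, ← hA, sub_eq_add_neg, zpow_add₀ hζ0, zpow_natCast, mul_pow]
    ring
  have hS2 : ∑ m ∈ Finset.range n, (α : ℂ) ^ (m + 1) *
      Complex.exp (((-((m : ℤ) + 1 + k) : ℤ) : ℂ) * (2 * Real.pi * Complex.I) / n) ^ j
      = ζ ^ (-(k : ℤ)) * ((A * ζ⁻¹) * G2) := by
    rw [hG2def, Finset.mul_sum, Finset.mul_sum]
    apply Finset.sum_congr rfl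
    intro m _
    have h1 : ζ ^ (-((m : ℤ) + 1 + k)) = ζ⁻¹ ^ (m + 1 + k) := by
      rw [inv_pow, ← zpow_natCast ζ, ← zpow_neg]; norm_cast
    have h2 : ζ ^ (-(k : ℤ)) = ζ⁻¹ ^ k := by
      rw [inv_pow, ← zpow_natCast ζ]
      exact zpow_neg ζ (k : ℤ) ▸ rfl
    rw [hexp, ← hA, h1, h2, mul_pow, pow_add, pow_add]
    ring
  rw [hnum, hden, hS1, hS2]
  have hbr : (G1 + (A * ζ⁻¹) * G2) * ((1 - A * ζ) * (1 - A * ζ⁻¹)) = (1 - A ^ 2) * (1 - A ^ n) := by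
    linear_combination (1 - A * ζ⁻¹) * hG1 + (A * ζ⁻¹ * (1 - A * ζ)) * hG2 - (1 - A ^ n) * A ^ 2 * hζmul
  have hD : (1 - A * ζ) * (1 - A * ζ⁻¹) ≠ 0 := mul_ne_zero hAζ hAζi
  have hE : (1 - A ^ 2) * (1 - A ^ n) ≠ 0 := mul_ne_zero h1A2 h1An
  rw [div_div_eq_mul_div, div_eq_iff hD, div_mul_eq_mul_div, div_mul_eq_mul_div, eq_div_iff hE]
  linear_combination (-(1 + A ^ 2) * ζ ^ (-(k:ℤ))) * hbr

lemma S_eq (τ α : ℝ) (hτα : τ * (1 + α ^ 2) = α) (hα0 : 0 < α) (hα1 : α < 1)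
    (n k : ℕ) (hk : k < n) :
    ∑ j ∈ Finset.range n,
        Complex.exp (-Complex.I * j * k * (2 * Real.pi / n)) /
          ((1 - 2 * τ * Real.cos (2 * Real.pi * j / n) : ℝ) : ℂ)
      = (1 + (α : ℂ) ^ 2) / ((1 - (α : ℂ) ^ 2) * (1 - (α : ℂ) ^ n)) *
          ((n : ℂ) * ((α : ℂ) ^ k + (α : ℂ) ^ (n - k))) := by
  have hn : 0 < n := lt_of_le_of_lt (Nat.zero_le k) hk
  have hnZ : (0 : ℤ) < (n : ℤ) := by exact_mod_cast hn
  rw [Finset.sum_congr rfl fun j _ => term_eq τ α hτα hα0 hα1 n k hn j, ← Finset.mul_sum]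
  congr 1
  rw [Finset.sum_add_distrib]
  have h1 : ∑ j ∈ Finset.range n, ∑ m ∈ Finset.range n, (α : ℂ) ^ m *
      Complex.exp ((((m : ℤ) - k : ℤ) : ℂ) * (2 * Real.pi * Complex.I) / n) ^ j
      = (n : ℂ) * (α : ℂ) ^ k := by
    rw [Finset.sum_comm]
    rw [Finset.sum_congr rfl fun m _ => by
      rw [← Finset.mul_sum, sum_exp_eq n hn ((m : ℤ) - k)]]
    rw [Finset.sum_eq_single_of_mem k (Finset.mem_range.mpr hk)]
    · rw [if_pos (by simp), mul_comm]
    · intro m hm hmk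
      rw [if_neg, mul_zero]
      intro hdvd
      have hm' := Finset.mem_range.mp hm
      have h0 : ((m : ℤ) - k) = 0 :=
        int_dvd_small hnZ (by push_cast; omega) (by push_cast; omega) hdvd
      exact hmk (by omega)
  have h2 : ∑ j ∈ Finset.range n, ∑ m ∈ Finset.range n, (α : ℂ) ^ (m + 1) *
      Complex.exp (((-((m : ℤ) + 1 + k) : ℤ) : ℂ) * (2 * Real.pi * Complex.I) / n) ^ j
      = (n : ℂ) * (α : ℂ) ^ (n - k) := by
    rw [Finset.sum_comm]
    rw [Finset.sum_congr rfl fun m _ => by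
      rw [← Finset.mul_sum, sum_exp_eq n hn (-((m : ℤ) + 1 + k))]]
    rw [Finset.sum_eq_single_of_mem (n - 1 - k) (Finset.mem_range.mpr (by omega))]
    · rw [if_pos, mul_comm, show n - 1 - k + 1 = n - k from by omega]
      · have : (-(((n - 1 - k : ℕ) : ℤ) + 1 + k)) = -(n : ℤ) := by push_cast; omega
        rw [this]
        exact dvd_neg.mpr dvd_rfl
    · intro m hm hmk
      rw [if_neg, mul_zero]
      intro hdvd
      have hm' := Finset.mem_range.mp hm
      have hdvd2 : (n : ℤ) ∣ ((m : ℤ) + 1 + k) := (dvd_neg).mp hdvd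
      have hdvd3 : (n : ℤ) ∣ ((m : ℤ) + 1 + k - n) := (Dvd.dvd.sub hdvd2 dvd_rfl)
      have h0 : ((m : ℤ) + 1 + k - n) = 0 :=
        int_dvd_small hnZ (by push_cast; omega) (by push_cast; omega) hdvd3
      exact hmk (by omega)
  rw [h1, h2]
  ring

theorem circulant_correlation_tendsto (τ : ℝ) (hτ0 : 0 < τ) (hτ : τ < 1 / 2) (k : ℕ) :
    Filter.Tendsto
      (fun n : ℕ =>
        (∑ j ∈ Finset.range n,
            Complex.exp (-Complex.I * j * k * (2 * Real.pi / n)) /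
              ((1 - 2 * τ * Real.cos (2 * Real.pi * j / n) : ℝ) : ℂ)) /
          ∑ j ∈ Finset.range n,
            ((1 - 2 * τ * Real.cos (2 * Real.pi * j / n) : ℝ) : ℂ)⁻¹)
      Filter.atTop
      (nhds ((((1 - Real.sqrt (1 - 4 * τ ^ 2)) / (2 * τ)) ^ k : ℝ) : ℂ)) := by
  set s : ℝ := Real.sqrt (1 - 4 * τ ^ 2) with hs
  set α : ℝ := (1 - s) / (2 * τ) with hα
  have hs0 : 0 ≤ s := Real.sqrt_nonneg _
  have hs2 : s ^ 2 = 1 - 4 * τ ^ 2 := Real.sq_sqrt (by nlinarith)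
  have hs1 : s < 1 := by nlinarith
  have hα0 : 0 < α := div_pos (by linarith) (by linarith)
  have hsgt : 1 - 2 * τ < s := by nlinarith [sq_nonneg (s + 2 * τ - 1)]
  have hα1 : α < 1 := by
    rw [hα, div_lt_one (by linarith)]
    linarith
  have hτα : τ * (1 + α ^ 2) = α := by
    rw [hα]
    field_simp
    nlinarith [hs2]
  -- nonvanishing facts over ℂ
  have h1A2 : (1 : ℂ) - (α : ℂ) ^ 2 ≠ 0 := by
    have : ((1 - α ^ 2 : ℝ) : ℂ) ≠ 0 := Complex.ofReal_ne_zero.mpr (by nlinarith)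
    push_cast at this; exact this
  have h1pA2 : (1 : ℂ) + (α : ℂ) ^ 2 ≠ 0 := by
    have : ((1 + α ^ 2 : ℝ) : ℂ) ≠ 0 := Complex.ofReal_ne_zero.mpr (by nlinarith)
    push_cast at this; exact this
  -- ratio formula
  have hratio : ∀ n : ℕ, k < n →
      (∑ j ∈ Finset.range n,
          Complex.exp (-Complex.I * j * k * (2 * Real.pi / n)) /
            ((1 - 2 * τ * Real.cos (2 * Real.pi * j / n) : ℝ) : ℂ)) /
        (∑ j ∈ Finset.range n,
          ((1 - 2 * τ * Real.cos (2 * Real.pi * j / n) : ℝ) : ℂ)⁻¹)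
      = (((α ^ k + α ^ (n - k)) / (1 + α ^ n) : ℝ) : ℂ) := by
    intro n hk
    have hn : 0 < n := lt_of_le_of_lt (Nat.zero_le k) hk
    have h1An : (1 : ℂ) - (α : ℂ) ^ n ≠ 0 := by
      have hαn : α ^ n < 1 := pow_lt_one₀ hα0.le hα1 hn.ne'
      have : ((1 - α ^ n : ℝ) : ℂ) ≠ 0 := Complex.ofReal_ne_zero.mpr (by nlinarith)
      push_cast at this; exact this
    have hC0 : (1 + (α : ℂ) ^ 2) / ((1 - (α : ℂ) ^ 2) * (1 - (α : ℂ) ^ n)) ≠ 0 :=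
      div_ne_zero h1pA2 (mul_ne_zero h1A2 h1An)
    have hden : ∑ j ∈ Finset.range n,
        ((1 - 2 * τ * Real.cos (2 * Real.pi * j / n) : ℝ) : ℂ)⁻¹
        = (1 + (α : ℂ) ^ 2) / ((1 - (α : ℂ) ^ 2) * (1 - (α : ℂ) ^ n)) *
            ((n : ℂ) * (1 + (α : ℂ) ^ n)) := by
      have := S_eq τ α hτα hα0 hα1 n 0 hn
      simp only [Nat.cast_zero, mul_zero, zero_mul, Complex.exp_zero, pow_zero,
        Nat.sub_zero, one_div] at this
      rw [← this]
    rw [S_eq τ α hτα hα0 hα1 n k hk, hden, mul_div_mul_left _ _ hC0,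
      mul_div_mul_left _ _ (Nat.cast_ne_zero.mpr hn.ne' : (n : ℂ) ≠ 0)]
    push_cast
    ring
  -- the limit
  have hreal : Filter.Tendsto (fun n : ℕ => (α ^ k + α ^ (n - k)) / (1 + α ^ n))
      Filter.atTop (nhds (α ^ k)) := by
    have hpow : Filter.Tendsto (fun n : ℕ => α ^ n) Filter.atTop (nhds 0) :=
      tendsto_pow_atTop_nhds_zero_of_lt_one hα0.le hα1
    have hpow2 : Filter.Tendsto (fun n : ℕ => α ^ (n - k)) Filter.atTop (nhds 0) :=
      hpow.comp (tendsto_sub_atTop_nat k)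
    have := ((tendsto_const_nhds (x := α ^ k) (f := (Filter.atTop : Filter ℕ))).add hpow2).div
      ((tendsto_const_nhds (x := (1:ℝ)) (f := (Filter.atTop : Filter ℕ))).add hpow)
      (by norm_num : (1 : ℝ) + 0 ≠ 0)
    simpa only [add_zero, div_one, Pi.div_def] using this
  have hlim : Filter.Tendsto
      (fun n : ℕ => (((α ^ k + α ^ (n - k)) / (1 + α ^ n) : ℝ) : ℂ))
      Filter.atTop (nhds ((α ^ k : ℝ) : ℂ)) :=
    (Complex.continuous_ofReal.tendsto _).comp hreal
  refine hlim.congr' ?_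
  filter_upwards [Filter.eventually_gt_atTop k] with n hn
  exact (hratio n hn).symm
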